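/- For every integer j ≥ 0 and every real z with z < 1, the j-th derivative of the function z ↦ -log(1-z)/(1-z) evaluated at z equals (H_j - log(1-z)) · j! / (1-z)^{j+1}, where H_j = ∑_{k=1}^{j} 1/k is the j-th harmonic number (H_0 = 0). -/

import Mathlib

private lemma harm_deriv (j : ℕ) (C : ℝ) (z : ℝ) (hz : z < 1) :
    HasDerivAt (fun w : ℝ => (C - Real.log (1 - w)) * (Nat.factorial j : ℝ) / (1 - w) ^ (j + 1))
      (((C + 1 / (j + 1)) - Real.log (1 - z)) * (Nat.factorial (j + 1) : ℝ) / (1 - z) ^ (j + 2)) z := by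
  have h1 : (0 : ℝ) < 1 - z := by linarith
  have hne : (1 : ℝ) - z ≠ 0 := ne_of_gt h1
  have hsub : HasDerivAt (fun w : ℝ => 1 - w) (-1) z := (hasDerivAt_id z).const_sub 1
  have hlog : HasDerivAt (fun w : ℝ => Real.log (1 - w)) ((1 - z)⁻¹ * (-1)) z :=
    (Real.hasDerivAt_log hne).comp z hsub
  have hu : HasDerivAt (fun w : ℝ => (C - Real.log (1 - w)) * (Nat.factorial j : ℝ))
      (-((1 - z)⁻¹ * (-1)) * (Nat.factorial j : ℝ)) z :=
    ((hlog.const_sub C).mul_const _)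
  have hv : HasDerivAt (fun w : ℝ => (1 - w) ^ (j + 1))
      ((j + 1 : ℕ) * (1 - z) ^ (j + 1 - 1) * (-1)) z := hsub.pow (j + 1)
  have hvne : (1 - z) ^ (j + 1) ≠ 0 := pow_ne_zero _ hne
  have := hu.div hv hvne
  refine this.congr_deriv ?_
  have hfact : (Nat.factorial (j + 1) : ℝ) = (j + 1) * Nat.factorial j := by
    push_cast [Nat.factorial_succ]; ring
  rw [hfact]
  simp only [Nat.add_sub_cancel, Nat.cast_add, Nat.cast_one]
  have hjne : (j : ℝ) + 1 ≠ 0 := by positivity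
  field_simp
  ring

/-- Derivative formula for the ordinary generating function of the
first-order harmonic numbers. -/
theorem stmt_11 (j : ℕ) (z : ℝ) (hz : z < 1) :
    iteratedDeriv j (fun z : ℝ => -Real.log (1 - z) / (1 - z)) z =
      ((∑ k ∈ Finset.Icc 1 j, (1 : ℝ) / k) - Real.log (1 - z)) *
        (Nat.factorial j : ℝ) / (1 - z) ^ (j + 1) := by
  induction j generalizing z with
  | zero =>
      simp [iteratedDeriv_zero]
  | succ j ih =>
      rw [iteratedDeriv_succ]
      have hev : (fun w => iteratedDeriv j (fun z : ℝ => -Real.log (1 - z) / (1 - z)) w) =ᶠ[nhds z]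
          (fun w => ((∑ k ∈ Finset.Icc 1 j, (1 : ℝ) / k) - Real.log (1 - w)) *
            (Nat.factorial j : ℝ) / (1 - w) ^ (j + 1)) := by
        filter_upwards [isOpen_Iio.mem_nhds (show z ∈ Set.Iio (1:ℝ) from hz)] with w hw
        exact ih w hw
      rw [hev.deriv_eq, (harm_deriv j _ z hz).deriv]
      rw [Finset.sum_Icc_succ_top (by norm_num : 1 ≤ j + 1)]
      push_cast
      ring_nf
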